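/- The canonical order on ℚ[x], where f < g iff g − f has positive leading coefficient, restricts to a discrete linear order on R_τ = {f ∈ ℚ[x] : ∀ p, f(τ_p) ∈ ℤ_p}: for every f ∈ R_τ there is no element of R_τ strictly between f and f + 1. -/

import Mathlib

open Polynomial

lemma den_one_of_norms (q : ℚ) (h : ∀ (p : ℕ), p.Prime → padicNorm p q ≤ 1) : q.den = 1 := by
  by_contra hd
  obtain ⟨p, hp, hdvd⟩ := Nat.exists_prime_and_dvd hd
  haveI : Fact p.Prime := ⟨hp⟩
  have hq : q ≠ 0 := by
    intro h0; rw [h0] at hd; exact hd rfl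
  have hnum : ¬ (p : ℤ) ∣ q.num := by
    intro hdv
    have h1 : p ∣ q.num.natAbs := Int.ofNat_dvd_right.mp (Int.dvd_natAbs.mpr hdv)
    exact hp.one_lt.ne' (Nat.eq_one_of_dvd_one (q.reduced ▸ Nat.dvd_gcd h1 hdvd))
  have hval : padicValRat p q < 0 := by
    rw [padicValRat_def, padicValInt.eq_zero_of_not_dvd hnum]
    have : 1 ≤ padicValNat p q.den := one_le_padicValNat_of_dvd q.pos.ne' hdvd
    omega
  have : 1 < padicNorm p q := by
    rw [padicNorm.eq_zpow_of_nonzero hq]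
    exact one_lt_zpow₀ (by exact_mod_cast hp.one_lt) (by omega)
  linarith [h p hp]

noncomputable def Rtau (τ : (p : ℕ) → [Fact p.Prime] → ℤ_[p]) : Subring (Polynomial ℚ) :=
  ⨅ (p : ℕ) (hp : Fact p.Prime),
    Subring.comap (Polynomial.aeval ((τ p : ℤ_[p]) : ℚ_[p]) : Polynomial ℚ →ₐ[ℚ] ℚ_[p]).toRingHom
      (PadicInt.Coe.ringHom (p := p)).range

theorem Rtau_discretely_ordered (τ : (p : ℕ) → [Fact p.Prime] → ℤ_[p])
    (f g : Rtau τ) :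
    ¬ (0 < ((g : Polynomial ℚ) - (f : Polynomial ℚ)).leadingCoeff ∧
        0 < ((f : Polynomial ℚ) + 1 - (g : Polynomial ℚ)).leadingCoeff) := by
  rintro ⟨h1, h2⟩
  set h : Polynomial ℚ := (g : Polynomial ℚ) - (f : Polynomial ℚ) with hh
  have key : (f : Polynomial ℚ) + 1 - (g : Polynomial ℚ) = 1 - h := by rw [hh]; ring
  rw [key] at h2
  have hne : h ≠ 0 := leadingCoeff_ne_zero.mp h1.ne'
  by_cases hdeg : h.natDegree = 0
  · have hC : h = Polynomial.C (h.coeff 0) := Polynomial.eq_C_of_natDegree_eq_zero hdeg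
    set q : ℚ := h.coeff 0 with hq
    have hq1 : 0 < q := by rwa [hC, Polynomial.leadingCoeff_C] at h1
    have hq2 : q < 1 := by
      rw [hC, ← Polynomial.C_1, ← Polynomial.C_sub, Polynomial.leadingCoeff_C] at h2
      linarith
    have hmem : h ∈ Rtau τ := by
      rw [hh]; exact sub_mem g.2 f.2
    have hnorm : ∀ (p : ℕ), p.Prime → padicNorm p q ≤ 1 := by
      intro p hp
      haveI : Fact p.Prime := ⟨hp⟩
      rw [Rtau] at hmem
      simp only [Subring.mem_iInf] at hmem
      have := hmem p this
      rw [Subring.mem_comap, RingHom.mem_range] at this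
      obtain ⟨z, hz⟩ := this
      have hzval : (z : ℚ_[p]) = ((q : ℚ) : ℚ_[p]) := by
        rw [show ((z : ℤ_[p]) : ℚ_[p]) = PadicInt.Coe.ringHom z from rfl, hz]
        simp only [AlgHom.toRingHom_eq_coe, RingHom.coe_coe]
        rw [hC]
        simp [Polynomial.aeval_C]
      have : ‖((q : ℚ) : ℚ_[p])‖ ≤ 1 := hzval ▸ z.2
      rw [Padic.eq_padicNorm] at this
      exact_mod_cast this
    have hden := den_one_of_norms q hnorm
    have : q = (q.num : ℚ) := by rw [← Rat.num_div_den q, hden]; simp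
    rw [this] at hq1 hq2
    have h1' : 0 < q.num := by exact_mod_cast hq1
    have h2' : q.num < 1 := by exact_mod_cast hq2
    omega
  · have hdlt : (1 : Polynomial ℚ).degree < h.degree := by
      rw [Polynomial.degree_one]
      exact Polynomial.natDegree_pos_iff_degree_pos.mp (Nat.pos_of_ne_zero hdeg)
    have hlc : (1 - h).leadingCoeff = -h.leadingCoeff := by
      rw [sub_eq_add_neg, Polynomial.leadingCoeff_add_of_degree_lt
        (by rwa [Polynomial.degree_neg]), Polynomial.leadingCoeff_neg]
    rw [hlc] at h2
    linarith
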